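/- Let α ∈ ℝ, ω > 0, let t₁ < t₂ < … < t_k be real numbers (event times) with real weights c₁, …, c_k, and define x(t) = α + Σ_{i : tᵢ < t} cᵢ·e^{−ω(t − tᵢ)}. Then on any open interval J ⊆ ℝ containing none of the event times t₁, …, t_k, the function x is differentiable and satisfies x'(t) = ω·(α − x(t)) for all t ∈ J. -/

import Mathlib

open Finset Set

/-- Deterministic core of Proposition 1 of the paper: between events, the opinion
`x(t) = α + Σ_{tᵢ < t} cᵢ·e^{−ω(t−tᵢ)}` is differentiable with `x'(t) = ω(α − x(t))` on any
open interval containing no event time. -/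
theorem stmt_13 (α ω : ℝ) (hω : 0 < ω) (k : ℕ)
    (tev : Fin k → ℝ) (htev : StrictMono tev)
    (c : Fin k → ℝ)
    (x : ℝ → ℝ)
    (hx : ∀ t, x t = α + ∑ i, if tev i < t then c i * Real.exp (-ω * (t - tev i)) else 0)
    (a b : ℝ)
    (hno : ∀ i, tev i ∉ Set.Ioo a b) :
    ∀ t ∈ Set.Ioo a b, HasDerivAt x (ω * (α - x t)) t := by
  intro t ht
  obtain ⟨hat, htb⟩ := ht
  -- inside the interval, the condition `tev i < s` is equivalent to `tev i ≤ a`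
  have hcond : ∀ s ∈ Set.Ioo a b, ∀ i, (tev i < s ↔ tev i ≤ a) := by
    intro s hs i
    rcases lt_or_ge a (tev i) with h | h
    · have hbi : b ≤ tev i := by
        by_contra hb
        exact hno i ⟨h, lt_of_not_ge hb⟩
      constructor
      · intro hlt; exact absurd (hlt.trans hs.2) (not_lt.mpr hbi)
      · intro hle; exact absurd (h.trans_le hle) (lt_irrefl _)
    · exact ⟨fun _ => h, fun _ => h.trans_lt hs.1⟩
  set y : ℝ → ℝ := fun s => α + ∑ i, if tev i ≤ a then c i * Real.exp (-ω * (s - tev i)) else 0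
  have hxy : ∀ s ∈ Set.Ioo a b, x s = y s := by
    intro s hs
    rw [hx s]
    congr 1
    refine Finset.sum_congr rfl fun i _ => ?_
    rw [if_congr (hcond s hs i) rfl rfl]
  have hy : HasDerivAt y (∑ i, if tev i ≤ a then c i * (-ω * Real.exp (-ω * (t - tev i))) else 0) t := by
    have : HasDerivAt (fun s : ℝ => α) 0 t := hasDerivAt_const _ _
    have hsum : HasDerivAt (fun s => ∑ i, if tev i ≤ a then c i * Real.exp (-ω * (s - tev i)) else 0)
        (∑ i, if tev i ≤ a then c i * (-ω * Real.exp (-ω * (t - tev i))) else 0) t := by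
      apply HasDerivAt.fun_sum
      intro i _
      by_cases h : tev i ≤ a
      · simp only [if_pos h]
        have harg : HasDerivAt (fun s : ℝ => -ω * (s - tev i)) (-ω) t := by
          simpa using ((hasDerivAt_id t).sub_const (tev i)).const_mul (-ω)
        have := (harg.exp).const_mul (c i)
        simpa [mul_comm, mul_assoc, mul_left_comm] using this
      · simp only [if_neg h]
        exact hasDerivAt_const _ _
    have h2 := this.add hsum
    rw [zero_add] at h2
    exact h2
  have hderiv : HasDerivAt x (∑ i, if tev i ≤ a then c i * (-ω * Real.exp (-ω * (t - tev i))) else 0) t := by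
    apply hy.congr_of_eventuallyEq
    filter_upwards [Ioo_mem_nhds hat htb] with s hs
    exact hxy s hs
  have heq : (∑ i, if tev i ≤ a then c i * (-ω * Real.exp (-ω * (t - tev i))) else 0)
      = ω * (α - x t) := by
    rw [hxy t ⟨hat, htb⟩]
    simp only [y]
    have : ω * (α - (α + ∑ i, if tev i ≤ a then c i * Real.exp (-ω * (t - tev i)) else 0))
        = -ω * ∑ i, if tev i ≤ a then c i * Real.exp (-ω * (t - tev i)) else 0 := by ring
    rw [this, Finset.mul_sum]
    refine Finset.sum_congr rfl fun i _ => ?_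
    split_ifs <;> ring
  rw [← heq]
  exact hderiv
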